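/- For all nonnegative integers p, r, s and n: A_n(p, r+s) = \sum_{i=0}^{n} A_i(p,r) \cdot A_{n-i}(p,s). -/

import Mathlib

/-- The Fuss-Catalan number `A_n(p,q) = q/(pn+q) * C(pn+q, n)`,
with the convention `A_0(p,q) = 1`. -/
def fussCatalan (p q n : ℕ) : ℚ :=
  if n = 0 then 1 else (q : ℚ) / (p * n + q) * ((p * n + q).choose n)

lemma fc_one (p q : ℕ) : fussCatalan p q 1 = q := by
  unfold fussCatalan
  simp only [one_ne_zero, if_false, mul_one, Nat.choose_one_right]
  rcases Nat.eq_zero_or_pos (p + q) with h | h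
  · obtain ⟨hp, hq⟩ := Nat.add_eq_zero.mp h
    simp [hp, hq]
  · have e : ((p:ℚ) * ((1:ℕ):ℚ) + q) = ((p + q : ℕ) : ℚ) := by push_cast; ring
    rw [e, div_mul_cancel₀]
    exact_mod_cast h.ne'

/-- The key recurrence `A_{n+1}(p, q+1) = A_{n+1}(p, q) + A_n(p, p+q)`. -/
lemma fc_rec (p q n : ℕ) :
    fussCatalan p (q + 1) (n + 1) = fussCatalan p q (n + 1) + fussCatalan p (p + q) n := by
  cases n with
  | zero =>
    rw [fc_one, fc_one]
    simp only [fussCatalan, if_pos rfl]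
    push_cast; ring
  | succ k =>
    rcases Nat.eq_zero_or_pos (p * (k + 2) + q) with h0 | hpos
    · have hq : q = 0 := Nat.eq_zero_of_add_eq_zero_left h0
      have hp : p = 0 := by
        have h1 := Nat.eq_zero_of_add_eq_zero_right h0
        exact (Nat.mul_eq_zero.mp h1).resolve_right (by omega)
      subst hp hq
      norm_num [fussCatalan, Nat.choose_eq_zero_of_lt (show 1 < k + 2 by omega),
        Nat.choose_eq_zero_of_lt (show 0 < k + 2 by omega),
        Nat.choose_eq_zero_of_lt (show 0 < k + 1 by omega)]
    · set N := p * (k + 2) + q with hN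
      have e1 : p * (k + 2) + (q + 1) = N + 1 := by omega
      have e2 : p * (k + 1) + (p + q) = N := by rw [hN]; ring
      have hP : (N + 1).choose (k + 2) = N.choose (k + 1) + N.choose (k + 2) :=
        Nat.choose_succ_succ' _ _
      have hS : (N + 1) * N.choose (k + 1) = (N + 1).choose (k + 2) * (k + 2) :=
        Nat.add_one_mul_choose_eq N (k + 1)
      have hPQ : ((N + 1).choose (k + 2) : ℚ)
          = (N.choose (k + 1) : ℚ) + (N.choose (k + 2) : ℚ) := by exact_mod_cast hP
      have hSQ : ((N : ℚ) + 1) * (N.choose (k + 1) : ℚ)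
          = ((N + 1).choose (k + 2) : ℚ) * ((k : ℚ) + 2) := by exact_mod_cast hS
      have hD : ((N : ℚ)) ≠ 0 := by exact_mod_cast hpos.ne'
      have hD1 : ((N : ℚ) + 1) ≠ 0 := by positivity
      simp only [fussCatalan, if_neg (Nat.succ_ne_zero _)]
      rw [e1, e2]
      have c1 : ((p : ℚ) * ((k:ℚ) + 1 + 1) + ((q:ℚ) + 1)) = (N : ℚ) + 1 := by
        rw [hN]; push_cast; ring
      have c2 : ((p : ℚ) * ((k:ℚ) + 1 + 1) + (q:ℚ)) = (N : ℚ) := by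
        rw [hN]; push_cast; ring
      have c3 : ((p : ℚ) * ((k:ℚ) + 1) + ((p:ℚ) + (q:ℚ))) = (N : ℚ) := by
        rw [hN]; push_cast; ring
      push_cast
      rw [c1, c2, c3]
      rw [div_mul_eq_mul_div, div_mul_eq_mul_div, div_mul_eq_mul_div,
        ← add_div, div_eq_div_iff hD1 hD]
      linear_combination ((N:ℚ) + 1) * (q:ℚ) * hPQ - (p:ℚ) * hSQ
        - ((N + 1).choose (k + 2) : ℚ) * c2

lemma fc_zero' (p q : ℕ) : fussCatalan p q 0 = 1 := by simp [fussCatalan]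

lemma conv_zero (p r n : ℕ) :
    ∑ i ∈ Finset.range (n + 1), fussCatalan p r i * fussCatalan p 0 (n - i)
      = fussCatalan p r n := by
  rw [Finset.sum_eq_single_of_mem n (Finset.self_mem_range_succ n)]
  · rw [Nat.sub_self, fc_zero', mul_one]
  · intro b hb hbn
    have : n - b ≠ 0 := by
      have := Finset.mem_range.mp hb; omega
    simp [fussCatalan, if_neg this]

lemma conv (p : ℕ) : ∀ n s r, (∑ i ∈ Finset.range (n + 1),
    fussCatalan p r i * fussCatalan p s (n - i)) = fussCatalan p (r + s) n := by
  intro n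
  induction n using Nat.strong_induction_on with
  | _ n ih =>
    intro s
    induction s with
    | zero => intro r; rw [conv_zero, Nat.add_zero]
    | succ s ihs =>
      intro r
      cases n with
      | zero => simp [fussCatalan]
      | succ m =>
        have step : ∀ i ∈ Finset.range (m + 1),
            fussCatalan p r i * fussCatalan p (s + 1) (m + 1 - i)
              = fussCatalan p r i * fussCatalan p s (m + 1 - i)
                + fussCatalan p r i * fussCatalan p (p + s) (m - i) := by
          intro i hi
          have hle : i ≤ m := Nat.lt_succ_iff.mp (Finset.mem_range.mp hi)
          have h1 : m + 1 - i = (m - i) + 1 := by omega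
          rw [h1, fc_rec, mul_add]
        rw [Finset.sum_range_succ, Finset.sum_congr rfl step, Finset.sum_add_distrib]
        have hfull := ihs r
        rw [Finset.sum_range_succ, Nat.sub_self, fc_zero', mul_one] at hfull
        have h2 := ih m (Nat.lt_succ_self m) (p + s) r
        have h3 : fussCatalan p (r + (s + 1)) (m + 1)
            = fussCatalan p (r + s) (m + 1) + fussCatalan p (p + (r + s)) m := by
          have := fc_rec p (r + s) m
          rw [show r + (s + 1) = (r + s) + 1 by ring]
          exact this
        rw [h3, Nat.sub_self, fc_zero', mul_one]
        rw [show r + (p + s) = p + (r + s) by ring] at h2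
        linarith [hfull, h2]

theorem fussCatalan_convolution (p r s n : ℕ) :
    fussCatalan p (r + s) n =
      ∑ i ∈ Finset.range (n + 1), fussCatalan p r i * fussCatalan p s (n - i) := by
  exact (conv p n s r).symm
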